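/- The Gordon–Andrews multisums satisfy the Rogers–Selberg recursions: Fix an integer k ≥ 1. For 0 ≤ i ≤ k define G_i ∈ ℚ[[x,q]] by G_i(x,q) = ∑_{N₁ ≥ ⋯ ≥ N_k ≥ 0} x^{N₁+⋯+N_k} q^{N₁²+⋯+N_k²+N_{i+1}+⋯+N_k} · ((q)_{N₁−N₂} ⋯ (q)_{N_{k−1}−N_k} (q)_{N_k})^{−1}. Then for every i with 1 ≤ i ≤ k, G_i(x, q) − (xq)^i · G_{k−i}(xq, q) = G_{i−1}(x, q), and moreover G_0(x, q) = G_k(xq, q). -/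

import Mathlib

open PowerSeries

/-- `(q)_n = ∏_{j=1}^n (1 - q^j)` in `ℚ[[q]]`. -/
noncomputable def qPoch (n : ℕ) : PowerSeries ℚ :=
  ∏ j ∈ Finset.range n, (1 - (X : PowerSeries ℚ) ^ (j + 1))

/-- Extension of a `k`-tuple `N₁ ≥ ⋯ ≥ N_k` (0-indexed) by zeros. -/
def pad {k : ℕ} (N : Fin k → ℕ) : ℕ → ℕ := fun j => if h : j < k then N ⟨j, h⟩ else 0

/-- We realize `ℚ[[x,q]]` as `ℚ[[q]][[x]]`; the coefficient of `x^m q^n` in `F` is the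
coefficient of `q^n` in the `m`-th coefficient of `F`. -/
abbrev XQSeries : Type := PowerSeries (PowerSeries ℚ)

/-- The substitution `F(x,q) ↦ F(x q^r, q)`: the coefficient of `x^m` gets multiplied by
`q^{r m}`, so the coefficient of `x^m q^n` of the result is the coefficient of
`x^m q^{n - r m}` of `F`. -/
noncomputable def qShift (r : ℕ) (F : XQSeries) : XQSeries :=
  PowerSeries.mk fun m => (X : PowerSeries ℚ) ^ (r * m) * PowerSeries.coeff m F

/-- The element `x` of `ℚ[[x,q]] = ℚ[[q]][[x]]`. -/
noncomputable def xVar : XQSeries := PowerSeries.X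

/-- The element `q` of `ℚ[[x,q]] = ℚ[[q]][[x]]`. -/
noncomputable def qVar : XQSeries := PowerSeries.C PowerSeries.X

/-- The Gordon–Andrews multisum
`G_i(x,q) = ∑_{N₁ ≥ ⋯ ≥ N_k ≥ 0} x^{N₁+⋯+N_k} q^{N₁²+⋯+N_k²+N_{i+1}+⋯+N_k}
  / ((q)_{N₁-N₂} ⋯ (q)_{N_{k-1}-N_k} (q)_{N_k}) ∈ ℚ[[x,q]]`:
the coefficient of `x^m` is the (finite) sum over weakly decreasing `k`-tuples
with `N₁ + ⋯ + N_k = m`. -/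
noncomputable def GA (k i : ℕ) : XQSeries :=
  PowerSeries.mk fun m =>
    ∑ N ∈ (Finset.Nat.antidiagonalTuple k m).filter
        (fun N => ∀ a b : Fin k, a ≤ b → N b ≤ N a),
      (X : PowerSeries ℚ) ^
          (∑ j ∈ Finset.range k, (pad N j) ^ 2 + ∑ j ∈ Finset.Ico i k, pad N j) *
        (∏ j ∈ Finset.range k, qPoch (pad N j - pad N (j + 1)))⁻¹

-- ==== auxiliary definitions and lemmas ====

noncomputable def gco (k i m : ℕ) : PowerSeries ℚ := PowerSeries.coeff m (GA k i)

def gset (k m : ℕ) : Finset (Fin k → ℕ) :=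
  (Finset.Nat.antidiagonalTuple k m).filter (fun N => ∀ a b : Fin k, a ≤ b → N b ≤ N a)

def eexp (k i : ℕ) (N : Fin k → ℕ) : ℕ :=
  ∑ j ∈ Finset.range k, (pad N j) ^ 2 + ∑ j ∈ Finset.Ico i k, pad N j

noncomputable def dpr (k : ℕ) (N : Fin k → ℕ) : PowerSeries ℚ :=
  ∏ j ∈ Finset.range k, qPoch (pad N j - pad N (j + 1))

lemma gco_eq (k i m : ℕ) :
    gco k i m = ∑ N ∈ gset k m, (X : PowerSeries ℚ) ^ eexp k i N * (dpr k N)⁻¹ := by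
  simp [gco, GA, coeff_mk, gset, eexp, dpr]

lemma mem_gset {k m : ℕ} {N : Fin k → ℕ} :
    N ∈ gset k m ↔ (∑ i, N i) = m ∧ ∀ a b : Fin k, a ≤ b → N b ≤ N a := by
  simp [gset, Finset.mem_filter, Finset.Nat.mem_antidiagonalTuple]

lemma pad_fin {k : ℕ} (N : Fin k → ℕ) (a : Fin k) : pad N a = N a := by
  simp [pad, a.isLt]

lemma pad_lt {k : ℕ} (N : Fin k → ℕ) (j : ℕ) (h : j < k) : pad N j = N ⟨j, h⟩ := dif_pos h

lemma pad_ge {k : ℕ} (N : Fin k → ℕ) (j : ℕ) (h : k ≤ j) : pad N j = 0 := dif_neg (by omega)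

lemma pad_sum {k : ℕ} (N : Fin k → ℕ) :
    ∑ j ∈ Finset.range k, pad N j = ∑ i : Fin k, N i := by
  rw [← Fin.sum_univ_eq_sum_range]
  exact Finset.sum_congr rfl fun a _ => pad_fin N a

lemma constantCoeff_qPoch (n : ℕ) : constantCoeff (qPoch n) = 1 := by
  rw [qPoch, map_prod]
  refine Finset.prod_eq_one fun j _ => ?_
  simp [zero_pow (Nat.succ_ne_zero j)]

lemma qPoch_ne (n : ℕ) : constantCoeff (qPoch n) ≠ 0 := by
  rw [constantCoeff_qPoch]; norm_num

lemma inv_mul_of_unit {a b : PowerSeries ℚ} (ha : constantCoeff a ≠ 0)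
    (hb : constantCoeff b ≠ 0) : (a * b)⁻¹ = a⁻¹ * b⁻¹ := by
  have h : (a * b) * (a⁻¹ * b⁻¹) = 1 := by
    have := PowerSeries.mul_inv_cancel a ha
    have := PowerSeries.mul_inv_cancel b hb
    calc (a * b) * (a⁻¹ * b⁻¹) = (a * a⁻¹) * (b * b⁻¹) := by ring
    _ = 1 := by rw [PowerSeries.mul_inv_cancel a ha, PowerSeries.mul_inv_cancel b hb, one_mul]
  have hab : constantCoeff (a * b) ≠ 0 := by
    rw [map_mul]; exact mul_ne_zero ha hb
  have h2 := PowerSeries.mul_inv_cancel _ hab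
  calc (a*b)⁻¹ = (a*b)⁻¹ * ((a*b) * (a⁻¹ * b⁻¹)) := by rw [h, mul_one]
  _ = ((a*b) * (a*b)⁻¹) * (a⁻¹*b⁻¹) := by ring
  _ = a⁻¹ * b⁻¹ := by rw [h2, one_mul]

lemma one_sub_mul_qPoch_inv (s : ℕ) :
    (1 - (X : PowerSeries ℚ) ^ (s+1)) * (qPoch (s+1))⁻¹ = (qPoch s)⁻¹ := by
  have h : qPoch (s+1) = qPoch s * (1 - (X : PowerSeries ℚ) ^ (s+1)) := by
    rw [qPoch, qPoch, Finset.prod_range_succ]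
  have hu : constantCoeff (1 - (X : PowerSeries ℚ) ^ (s+1)) ≠ 0 := by
    simp [zero_pow (Nat.succ_ne_zero s)]
  rw [h, inv_mul_of_unit (qPoch_ne s) hu]
  calc (1 - (X : PowerSeries ℚ)^(s+1)) * ((qPoch s)⁻¹ * (1 - (X : PowerSeries ℚ)^(s+1))⁻¹)
      = ((1 - (X : PowerSeries ℚ)^(s+1)) * (1 - (X : PowerSeries ℚ)^(s+1))⁻¹) * (qPoch s)⁻¹ := by ring
  _ = (qPoch s)⁻¹ := by rw [PowerSeries.mul_inv_cancel _ hu, one_mul]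

-- B at coefficient level
lemma B_coeff (k m : ℕ) : gco k 0 m = (X : PowerSeries ℚ) ^ m * gco k k m := by
  rw [gco_eq, gco_eq, Finset.mul_sum]
  refine Finset.sum_congr rfl fun N hN => ?_
  obtain ⟨hsum, -⟩ := mem_gset.mp hN
  have he : eexp k 0 N = m + eexp k k N := by
    unfold eexp
    have h1 : Finset.Ico 0 k = Finset.range k := by rw [Finset.range_eq_Ico]
    have h2 : ∑ j ∈ Finset.Ico k k, pad N j = 0 := by simp
    rw [h1, h2, pad_sum, hsum]
    omega
  rw [he, pow_add, mul_assoc]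

-- coefficient of the middle term
lemma coeff_rhs (i : ℕ) (F : XQSeries) (m : ℕ) :
    PowerSeries.coeff m ((xVar * qVar) ^ i * qShift 1 F) =
      if i ≤ m then (X : PowerSeries ℚ) ^ m * PowerSeries.coeff (m - i) F
      else 0 := by
  have h1 : (xVar * qVar) ^ i * qShift 1 F
      = (PowerSeries.C ((X : PowerSeries ℚ) ^ i) * qShift 1 F) * (X : XQSeries) ^ i := by
    rw [xVar, qVar, mul_pow, ← map_pow]
    ring
  rw [h1, PowerSeries.coeff_mul_X_pow']
  split
  · next hle =>
    rw [PowerSeries.coeff_C_mul, qShift, coeff_mk, one_mul]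
    rw [← mul_assoc, ← pow_add]
    congr 2
    omega
  · rfl



-- === peel lemma ===
lemma constantCoeff_dpr (k : ℕ) (N : Fin k → ℕ) : constantCoeff (dpr k N) = 1 := by
  rw [dpr, map_prod]
  exact Finset.prod_eq_one fun j _ => constantCoeff_qPoch _

lemma dpr_ne (k : ℕ) (N : Fin k → ℕ) : constantCoeff (dpr k N) ≠ 0 := by
  rw [constantCoeff_dpr]; norm_num

lemma peel (k i m : ℕ) (hi : i ≤ k + 1) :
    gco (k+1) i m = ∑ s ∈ Finset.range (m+1),
      if (k+1)*s ≤ m then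
        (X : PowerSeries ℚ) ^ ((k+1)*s^2 + (k+1-i)*s + 2*s*(m-(k+1)*s)) * (qPoch s)⁻¹
          * gco k (min i k) (m - (k+1)*s)
      else 0 := by
  rw [← Finset.sum_filter]
  have hrhs : ∀ s ∈ (Finset.range (m+1)).filter (fun s => (k+1)*s ≤ m),
      (X : PowerSeries ℚ) ^ ((k+1)*s^2 + (k+1-i)*s + 2*s*(m-(k+1)*s)) * (qPoch s)⁻¹
          * gco k (min i k) (m - (k+1)*s)
        = ∑ N' ∈ gset k (m - (k+1)*s),
            (X : PowerSeries ℚ) ^ ((k+1)*s^2 + (k+1-i)*s + 2*s*(m-(k+1)*s)) * (qPoch s)⁻¹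
              * ((X : PowerSeries ℚ) ^ eexp k (min i k) N' * (dpr k N')⁻¹) := by
    intro s _
    rw [gco_eq, Finset.mul_sum]
  rw [Finset.sum_congr rfl hrhs]
  rw [Finset.sum_sigma' ((Finset.range (m+1)).filter (fun s => (k+1)*s ≤ m))
    (fun s => gset k (m - (k+1)*s))
    (fun s N' => (X : PowerSeries ℚ) ^ ((k+1)*s^2 + (k+1-i)*s + 2*s*(m-(k+1)*s)) * (qPoch s)⁻¹
              * ((X : PowerSeries ℚ) ^ eexp k (min i k) N' * (dpr k N')⁻¹)), gco_eq]
  refine Finset.sum_nbij'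
    (fun N => ⟨N (Fin.last k), fun l => N l.castSucc - N (Fin.last k)⟩)
    (fun p => Fin.snoc (fun l => p.2 l + p.1) p.1) ?_ ?_ ?_ ?_ ?_
  · -- forward membership
    intro N hN
    obtain ⟨hs, hd⟩ := mem_gset.mp hN
    have hlast : ∀ a : Fin (k+1), N (Fin.last k) ≤ N a := fun a => hd a (Fin.last k) (Fin.le_last a)
    have hks : (k+1) * N (Fin.last k) ≤ m := by
      calc (k+1) * N (Fin.last k) = ∑ _a : Fin (k+1), N (Fin.last k) := by
            rw [Finset.sum_const, Finset.card_univ, Fintype.card_fin, smul_eq_mul]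
        _ ≤ ∑ a, N a := Finset.sum_le_sum (fun a _ => hlast a)
        _ = m := hs
    have hcs : ∑ l : Fin k, N l.castSucc = m - N (Fin.last k) := by
      have := Fin.sum_univ_castSucc N
      omega
    have hsum' : ∑ l : Fin k, (N l.castSucc - N (Fin.last k)) = m - (k+1) * N (Fin.last k) := by
      have h1 : ∑ l : Fin k, ((N l.castSucc - N (Fin.last k)) + N (Fin.last k))
          = ∑ l : Fin k, N l.castSucc :=
        Finset.sum_congr rfl fun l _ => Nat.sub_add_cancel (hlast l.castSucc)
      rw [Finset.sum_add_distrib, Finset.sum_const, Finset.card_univ, Fintype.card_fin,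
        smul_eq_mul] at h1
      have hmul : (k+1) * N (Fin.last k) = k * N (Fin.last k) + N (Fin.last k) := by ring
      omega
    refine Finset.mem_sigma.mpr ⟨Finset.mem_filter.mpr ⟨Finset.mem_range.mpr ?_, hks⟩, ?_⟩
    · have : N (Fin.last k) ≤ (k+1) * N (Fin.last k) := Nat.le_mul_of_pos_left _ (Nat.succ_pos k)
      show N (Fin.last k) < m + 1
      omega
    · refine mem_gset.mpr ⟨hsum', fun a b hab => ?_⟩
      exact Nat.sub_le_sub_right (hd a.castSucc b.castSucc (by simpa using hab)) _
  · -- backward membership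
    rintro ⟨s, N'⟩ hp
    obtain ⟨hs1, hN'⟩ := Finset.mem_sigma.mp hp
    obtain ⟨-, hs2⟩ := Finset.mem_filter.mp hs1
    obtain ⟨hN's, hN'd⟩ := mem_gset.mp hN'
    dsimp only at hs2 hN's hN'd ⊢
    refine mem_gset.mpr ⟨?_, ?_⟩
    · rw [Fin.sum_univ_castSucc]
      simp only [Fin.snoc_castSucc, Fin.snoc_last]
      rw [Finset.sum_add_distrib, Finset.sum_const, Finset.card_univ, Fintype.card_fin,
        smul_eq_mul, hN's]
      have hmul : (k+1) * s = k * s + s := by ring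
      omega
    · intro a b hab
      rcases Fin.eq_castSucc_or_eq_last b with ⟨bl, rfl⟩ | rfl
      · rcases Fin.eq_castSucc_or_eq_last a with ⟨al, rfl⟩ | rfl
        · simp only [Fin.snoc_castSucc]
          exact Nat.add_le_add_right (hN'd al bl (by simpa using hab)) _
        · exact absurd hab (not_le.mpr (Fin.castSucc_lt_last bl))
      · rcases Fin.eq_castSucc_or_eq_last a with ⟨al, rfl⟩ | rfl
        · simp only [Fin.snoc_castSucc, Fin.snoc_last]
          exact Nat.le_add_left _ _
        · exact le_refl _
  · -- left inverse
    intro N hN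
    obtain ⟨-, hd⟩ := mem_gset.mp hN
    dsimp only
    funext j
    refine Fin.lastCases ?_ ?_ j
    · simp
    · intro l
      simp only [Fin.snoc_castSucc]
      exact Nat.sub_add_cancel (hd l.castSucc (Fin.last k) (Fin.le_last _))
  · -- right inverse
    rintro ⟨s, N'⟩ _
    dsimp only
    have h1 : (Fin.snoc (fun l => N' l + s) s : Fin (k+1) → ℕ) (Fin.last k) = s := by simp
    have h2 : (fun l : Fin k => (Fin.snoc (fun l => N' l + s) s : Fin (k+1) → ℕ) l.castSucc
        - (Fin.snoc (fun l => N' l + s) s : Fin (k+1) → ℕ) (Fin.last k)) = N' := by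
      funext l; simp
    exact Sigma.ext h1 (heq_of_eq h2)
  · -- term equality
    intro N hN
    obtain ⟨hs, hd⟩ := mem_gset.mp hN
    set s := N (Fin.last k) with hsdef
    set N' : Fin k → ℕ := fun l => N l.castSucc - s with hN'def
    have hlast : ∀ a : Fin (k+1), s ≤ N a := fun a => hd a (Fin.last k) (Fin.le_last a)
    have hks : (k+1) * s ≤ m := by
      calc (k+1) * s = ∑ _a : Fin (k+1), s := by
            rw [Finset.sum_const, Finset.card_univ, Fintype.card_fin, smul_eq_mul]
        _ ≤ ∑ a, N a := Finset.sum_le_sum (fun a _ => hlast a)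
        _ = m := hs
    set c := m - (k+1)*s with hcdef
    have hpad : ∀ j, j ≤ k → pad N j = pad N' j + s := by
      intro j hj
      rcases Nat.lt_or_ge j k with h | h
      · have hj1 : j < k + 1 := by omega
        rw [pad_lt N j hj1, pad_lt N' j h]
        have hc : (⟨j, h⟩ : Fin k).castSucc = (⟨j, hj1⟩ : Fin (k+1)) := by
          apply Fin.ext; simp
        rw [hN'def]
        simp only [hc]
        exact (Nat.sub_add_cancel (hlast _)).symm
      · have hjk : j = k := by omega
        rw [hjk, pad_lt N k (Nat.lt_succ_self k), pad_ge N' k (le_refl k)]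
        have hc : (⟨k, Nat.lt_succ_self k⟩ : Fin (k+1)) = Fin.last k := rfl
        rw [hc, zero_add]
    have hsum' : ∑ l : Fin k, N' l = c := by
      have h1 : ∑ l : Fin k, (N' l + s) = ∑ l : Fin k, N l.castSucc :=
        Finset.sum_congr rfl fun l _ => by
          rw [hN'def]; exact Nat.sub_add_cancel (hlast l.castSucc)
      rw [Finset.sum_add_distrib, Finset.sum_const, Finset.card_univ, Fintype.card_fin,
        smul_eq_mul] at h1
      have h2 := Fin.sum_univ_castSucc N
      rw [hs] at h2
      have hmul : (k+1) * s = k * s + s := by ring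
      omega
    have hNsum : ∑ j ∈ Finset.range k, pad N' j = c := by rw [pad_sum, hsum']
    have hpadk : pad N' k = 0 := pad_ge N' k (le_refl k)
    have hsq : ∑ j ∈ Finset.range (k+1), pad N j ^ 2
        = ∑ j ∈ Finset.range k, pad N' j ^ 2 + (2*s*c + (k+1)*s^2) := by
      have h1 : ∑ j ∈ Finset.range (k+1), pad N j ^ 2
          = ∑ j ∈ Finset.range (k+1), (pad N' j ^2 + (2 * pad N' j * s + s^2)) := by
        refine Finset.sum_congr rfl fun j hj => ?_
        rw [hpad j (by simpa using Nat.lt_succ_iff.mp (Finset.mem_range.mp hj))]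
        ring
      rw [h1, Finset.sum_add_distrib, Finset.sum_add_distrib]
      have h2 : ∑ j ∈ Finset.range (k+1), pad N' j ^2 = ∑ j ∈ Finset.range k, pad N' j ^2 := by
        rw [Finset.sum_range_succ, hpadk]
        ring
      have h3 : ∑ j ∈ Finset.range (k+1), 2 * pad N' j * s = 2*s*c := by
        have : ∑ j ∈ Finset.range (k+1), 2 * pad N' j * s
            = 2 * s * ∑ j ∈ Finset.range (k+1), pad N' j := by
          rw [Finset.mul_sum]
          exact Finset.sum_congr rfl fun j _ => by ring
        rw [this, Finset.sum_range_succ, hpadk, add_zero, hNsum]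
      have h4 : ∑ _j ∈ Finset.range (k+1), s^2 = (k+1)*s^2 := by
        rw [Finset.sum_const, Finset.card_range, smul_eq_mul]
      rw [h2, h3, h4]
    have htail : ∑ j ∈ Finset.Ico i (k+1), pad N j
        = ∑ j ∈ Finset.Ico (min i k) k, pad N' j + (k+1-i)*s := by
      rcases Nat.lt_or_ge k i with h | h
      · have hik : i = k + 1 := by omega
        subst hik
        simp
      · have hmin : min i k = i := Nat.min_eq_left h
        rw [hmin]
        have h1 : ∑ j ∈ Finset.Ico i (k+1), pad N j
            = ∑ j ∈ Finset.Ico i (k+1), (pad N' j + s) := by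
          refine Finset.sum_congr rfl fun j hj => ?_
          have := Finset.mem_Ico.mp hj
          exact hpad j (by omega)
        rw [h1, Finset.sum_add_distrib, Finset.sum_const, Nat.card_Ico, smul_eq_mul,
          Finset.sum_Ico_succ_top h, hpadk, add_zero]
    have hexp : eexp (k+1) i N
        = ((k+1)*s^2 + (k+1-i)*s + 2*s*c) + eexp k (min i k) N' := by
      rw [eexp, eexp, hsq, htail]
      ring
    have hdpr : dpr (k+1) N = dpr k N' * qPoch s := by
      rw [dpr, Finset.prod_range_succ]
      have hl : pad N k - pad N (k+1) = s := by
        rw [hpad k (le_refl k), hpadk, pad_ge N (k+1) (le_refl (k+1))]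
        omega
      rw [hl, dpr]
      congr 1
      refine Finset.prod_congr rfl fun j hj => ?_
      have hjk := Finset.mem_range.mp hj
      rw [hpad j (by omega), hpad (j+1) (by omega)]
      exact congrArg qPoch (by omega)
    rw [hexp, pow_add, hdpr, inv_mul_of_unit (dpr_ne k N') (qPoch_ne s)]
    ring

-- === main induction ===
lemma ite_split {M : Type*} [AddCommMonoid M] {C D : Prop} [Decidable C] [Decidable D] (a b : M) :
    (if C then a + (if D then b else 0) else 0) = (if C then a else 0) + (if C ∧ D then b else 0) := by
  by_cases hC : C <;> by_cases hD : D <;> simp [hC, hD]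

lemma s_le_mul (a s : ℕ) : s ≤ (a+1)*s := Nat.le_mul_of_pos_left s (Nat.succ_pos a)

lemma fold_sub (u a : ℕ) (g : PowerSeries ℚ) :
    ((X : PowerSeries ℚ)^a - (X : PowerSeries ℚ)^(a+(u+1))) * (qPoch (u+1))⁻¹ * g
      = (X : PowerSeries ℚ)^a * (qPoch u)⁻¹ * g := by
  have h1 : (X : PowerSeries ℚ)^a - (X : PowerSeries ℚ)^(a+(u+1))
      = (X : PowerSeries ℚ)^a * (1 - (X : PowerSeries ℚ)^(u+1)) := by
    rw [mul_one_sub, ← pow_add]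
  rw [h1, mul_assoc ((X : PowerSeries ℚ)^a) (1 - (X : PowerSeries ℚ)^(u+1)) ((qPoch (u+1))⁻¹),
    one_sub_mul_qPoch_inv u]

theorem Amain : ∀ k i m : ℕ, 1 ≤ i → i ≤ k →
    gco k i m = gco k (i-1) m
      + (if i ≤ m then (X : PowerSeries ℚ)^m * gco k (k-i) (m-i) else 0) := by
  intro k
  induction k with
  | zero => intro i m h1 hik; omega
  | succ k IH =>
    intro i m h1 hik
    obtain ⟨i', rfl⟩ : ∃ i', i = i' + 1 := ⟨i - 1, by omega⟩
    rcases le_or_gt (i'+1) k with hcase | hcase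
    · -- case 1 ≤ i ≤ k
      simp only [Nat.add_sub_cancel]
      rw [show k+1-(i'+1) = k-i' from by omega]
      rw [peel k (i'+1) m (by omega), peel k i' m (by omega),
        peel k (k-i') (m-(i'+1)) (by omega)]
      simp only [Nat.min_eq_left hcase, Nat.min_eq_left (show i' ≤ k by omega),
        Nat.min_eq_left (show k-i' ≤ k by omega), show k+1-(k-i') = i'+1 from by omega]
      rw [← sub_eq_iff_eq_add', ← Finset.sum_sub_distrib]
      have key : ∀ s ∈ Finset.range (m+1),
          (if (k+1)*s ≤ m then
              (X : PowerSeries ℚ)^((k+1)*s^2 + (k+1-(i'+1))*s + 2*s*(m-(k+1)*s)) * (qPoch s)⁻¹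
                * gco k (i'+1) (m-(k+1)*s) else 0)
            - (if (k+1)*s ≤ m then
              (X : PowerSeries ℚ)^((k+1)*s^2 + (k+1-i')*s + 2*s*(m-(k+1)*s)) * (qPoch s)⁻¹
                * gco k i' (m-(k+1)*s) else 0)
          = (if ((k+1)*s ≤ m ∧ i'+1 ≤ m-(k+1)*s) then
              (X : PowerSeries ℚ)^((k+1)*s^2 + (k+1-(i'+1))*s + 2*s*(m-(k+1)*s) + (m-(k+1)*s))
                * (qPoch s)⁻¹ * gco k (k-(i'+1)) (m-(k+1)*s-(i'+1)) else 0)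
          + (if (k+1)*s ≤ m then
              ((X : PowerSeries ℚ)^((k+1)*s^2 + (k+1-(i'+1))*s + 2*s*(m-(k+1)*s))
                - (X : PowerSeries ℚ)^((k+1)*s^2 + (k+1-(i'+1))*s + 2*s*(m-(k+1)*s) + s))
                * (qPoch s)⁻¹ * gco k i' (m-(k+1)*s) else 0) := by
        intro s _
        have hE2 : (k+1)*s^2 + (k+1-i')*s + 2*s*(m-(k+1)*s)
            = (k+1)*s^2 + (k+1-(i'+1))*s + 2*s*(m-(k+1)*s) + s := by
          rw [show k+1-i' = (k+1-(i'+1))+1 from by omega]; ring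
        by_cases h : (k+1)*s ≤ m
        · have hih := IH (i'+1) (m-(k+1)*s) (by omega) hcase
          simp only [Nat.add_sub_cancel] at hih
          rw [if_pos h, if_pos h, if_pos h, hih, hE2]
          by_cases h2 : i'+1 ≤ m-(k+1)*s
          · rw [if_pos h2, if_pos ⟨h, h2⟩]
            ring
          · rw [if_neg h2, if_neg (fun hc => h2 hc.2), add_zero]
            ring
        · rw [if_neg h, if_neg h, if_neg h, if_neg (fun hc => h hc.1), sub_self, zero_add]
      rw [Finset.sum_congr rfl key, Finset.sum_add_distrib]
      by_cases him : i'+1 ≤ m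
      · -- positive case
        rw [if_pos him]
        have hkey2 : ∀ u ∈ Finset.range (m-(i'+1)+1),
            (if (k+1)*u ≤ m-(i'+1) then
                (X : PowerSeries ℚ)^((k+1)*u^2 + (i'+1)*u + 2*u*(m-(i'+1)-(k+1)*u)) * (qPoch u)⁻¹
                  * gco k (k-i') (m-(i'+1)-(k+1)*u) else 0)
            = (if (k+1)*u ≤ m-(i'+1) then
                (X : PowerSeries ℚ)^((k+1)*u^2 + (i'+1)*u + 2*u*(m-(i'+1)-(k+1)*u)) * (qPoch u)⁻¹
                  * gco k (k-(i'+1)) (m-(i'+1)-(k+1)*u) else 0)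
            + (if ((k+1)*u ≤ m-(i'+1) ∧ k-i' ≤ m-(i'+1)-(k+1)*u) then
                (X : PowerSeries ℚ)^((k+1)*u^2 + (i'+1)*u + 2*u*(m-(i'+1)-(k+1)*u) + (m-(i'+1)-(k+1)*u))
                  * (qPoch u)⁻¹ * gco k i' (m-(i'+1)-(k+1)*u-(k-i')) else 0) := by
          intro u _
          have hih := IH (k-i') (m-(i'+1)-(k+1)*u) (by omega) (by omega)
          rw [show k-i'-1 = k-(i'+1) from by omega, show k-(k-i') = i' from by omega] at hih
          rw [hih, mul_add, mul_ite, mul_zero, ite_split]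
          congr 1
          refine if_congr Iff.rfl ?_ rfl
          rw [pow_add]; ring
        rw [Finset.sum_congr rfl hkey2, Finset.sum_add_distrib, mul_add]
        have hsub : Finset.range (m-(i'+1)+1) ⊆ Finset.range (m+1) :=
          Finset.range_subset_range.mpr (by omega)
        congr 1
        · -- (I)
          rw [Finset.mul_sum]
          have hzA : ∀ x ∈ Finset.range (m+1), x ∉ Finset.range (m-(i'+1)+1) →
              (X : PowerSeries ℚ)^m * (if (k+1)*x ≤ m-(i'+1) then
                (X : PowerSeries ℚ)^((k+1)*x^2 + (i'+1)*x + 2*x*(m-(i'+1)-(k+1)*x)) * (qPoch x)⁻¹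
                  * gco k (k-(i'+1)) (m-(i'+1)-(k+1)*x) else 0) = 0 := by
            intro x hx hnx
            have hx1 := Finset.mem_range.mp hx
            have hx2 : ¬ (x < m-(i'+1)+1) := fun h => hnx (Finset.mem_range.mpr h)
            have := s_le_mul k x
            rw [if_neg (by omega), mul_zero]
          rw [Finset.sum_subset hsub hzA]
          refine Finset.sum_congr rfl fun s _ => ?_
          have hsle := s_le_mul k s
          rw [mul_ite, mul_zero]
          by_cases hc : (k+1)*s ≤ m-(i'+1)
          · rw [if_pos hc, if_pos (show (k+1)*s ≤ m ∧ i'+1 ≤ m-(k+1)*s by omega)]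
            rw [show m-(k+1)*s-(i'+1) = m-(i'+1)-(k+1)*s from by omega]
            have hexp : (k+1)*s^2 + (k+1-(i'+1))*s + 2*s*(m-(k+1)*s) + (m-(k+1)*s)
                = m + ((k+1)*s^2 + (i'+1)*s + 2*s*(m-(i'+1)-(k+1)*s)) := by
              zify [show (k+1)*s ≤ m by omega, show i'+1 ≤ m from him,
                show (k+1)*s ≤ m-(i'+1) from hc, show i'+1 ≤ k+1 by omega]
              ring
            rw [hexp, pow_add]
            ring
          · rw [if_neg hc, if_neg (fun hc2 => hc (by omega))]
        · -- (II)
          rw [Finset.mul_sum]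
          have hzB : ∀ x ∈ Finset.range (m+1), x ∉ Finset.range (m-(i'+1)+1) →
              (X : PowerSeries ℚ)^m * (if ((k+1)*x ≤ m-(i'+1) ∧ k-i' ≤ m-(i'+1)-(k+1)*x) then
                (X : PowerSeries ℚ)^((k+1)*x^2 + (i'+1)*x + 2*x*(m-(i'+1)-(k+1)*x) + (m-(i'+1)-(k+1)*x))
                  * (qPoch x)⁻¹ * gco k i' (m-(i'+1)-(k+1)*x-(k-i')) else 0) = 0 := by
            intro x hx hnx
            have hx1 := Finset.mem_range.mp hx
            have hx2 : ¬ (x < m-(i'+1)+1) := fun h => hnx (Finset.mem_range.mpr h)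
            have := s_le_mul k x
            rw [if_neg (fun hc2 => absurd hc2.1 (by omega)), mul_zero]
          rw [Finset.sum_subset hsub hzB, Finset.sum_range_succ' _ m, Finset.sum_range_succ]
          have h0 : (if (k+1)*0 ≤ m then
              ((X : PowerSeries ℚ)^((k+1)*0^2 + (k+1-(i'+1))*0 + 2*0*(m-(k+1)*0))
                - (X : PowerSeries ℚ)^((k+1)*0^2 + (k+1-(i'+1))*0 + 2*0*(m-(k+1)*0) + 0))
                * (qPoch 0)⁻¹ * gco k i' (m-(k+1)*0) else 0) = 0 := by
            simp
          have hm : (X : PowerSeries ℚ)^m * (if ((k+1)*m ≤ m-(i'+1) ∧ k-i' ≤ m-(i'+1)-(k+1)*m) then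
              (X : PowerSeries ℚ)^((k+1)*m^2 + (i'+1)*m + 2*m*(m-(i'+1)-(k+1)*m) + (m-(i'+1)-(k+1)*m))
                * (qPoch m)⁻¹ * gco k i' (m-(i'+1)-(k+1)*m-(k-i')) else 0) = 0 := by
            have := s_le_mul k m
            rw [if_neg (fun hc2 => absurd hc2.1 (by omega)), mul_zero]
          rw [h0, hm, add_zero, add_zero]
          refine Finset.sum_congr rfl fun u _ => ?_
          have hmul : (k+1)*(u+1) = (k+1)*u + (k+1) := by ring
          have hsle := s_le_mul k u
          rw [mul_ite, mul_zero]
          by_cases hc : (k+1)*(u+1) ≤ m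
          · have hc1 : (k+1)*u ≤ m-(i'+1) := by omega
            have hc2 : k-i' ≤ m-(i'+1)-(k+1)*u := by omega
            rw [if_pos hc, if_pos ⟨hc1, hc2⟩]
            rw [show m-(i'+1)-(k+1)*u-(k-i') = m-(k+1)*(u+1) from by omega]
            rw [fold_sub u ((k+1)*(u+1)^2 + (k+1-(i'+1))*(u+1) + 2*(u+1)*(m-(k+1)*(u+1)))]
            have hexp : (k+1)*(u+1)^2 + (k+1-(i'+1))*(u+1) + 2*(u+1)*(m-(k+1)*(u+1))
                = m + ((k+1)*u^2 + (i'+1)*u + 2*u*(m-(i'+1)-(k+1)*u) + (m-(i'+1)-(k+1)*u)) := by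
              zify [show (k+1)*(u+1) ≤ m from hc, show i'+1 ≤ m from him,
                show (k+1)*u ≤ m-(i'+1) from hc1, show i'+1 ≤ k+1 by omega]
              ring
            rw [hexp, pow_add]
            ring
          · rw [if_neg hc, if_neg (fun hc2 => hc (by omega))]
      · -- negative case
        rw [if_neg him]
        refine (congrArg₂ (· + ·) (Finset.sum_eq_zero fun s _ => ?_)
          (Finset.sum_eq_zero fun s _ => ?_)).trans (add_zero 0)
        · exact if_neg (fun hc => him (le_trans hc.2 (Nat.sub_le m ((k+1)*s))))
        · by_cases h : (k+1)*s ≤ m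
          · rcases Nat.eq_zero_or_pos s with rfl | hspos
            · simp
            · exfalso
              have := Nat.le_mul_of_pos_right (k+1) hspos
              omega
          · exact if_neg h
    · -- case i = k + 1
      have hik2 : i' = k := by omega
      subst hik2
      simp only [Nat.add_sub_cancel, Nat.sub_self]
      rw [peel i' (i'+1) m (by omega), peel i' i' m (by omega), peel i' 0 (m-(i'+1)) (by omega)]
      simp only [Nat.min_self, Nat.min_eq_right (show i' ≤ i'+1 from by omega),
        Nat.min_eq_left (Nat.zero_le i'), Nat.sub_zero]
      rw [← sub_eq_iff_eq_add', ← Finset.sum_sub_distrib]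
      have key : ∀ s ∈ Finset.range (m+1),
          (if (i'+1)*s ≤ m then
              (X : PowerSeries ℚ)^((i'+1)*s^2 + (i'+1-(i'+1))*s + 2*s*(m-(i'+1)*s)) * (qPoch s)⁻¹
                * gco i' i' (m-(i'+1)*s) else 0)
            - (if (i'+1)*s ≤ m then
              (X : PowerSeries ℚ)^((i'+1)*s^2 + (i'+1-i')*s + 2*s*(m-(i'+1)*s)) * (qPoch s)⁻¹
                * gco i' i' (m-(i'+1)*s) else 0)
          = (if (i'+1)*s ≤ m then
              ((X : PowerSeries ℚ)^((i'+1)*s^2 + (i'+1-(i'+1))*s + 2*s*(m-(i'+1)*s))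
                - (X : PowerSeries ℚ)^((i'+1)*s^2 + (i'+1-(i'+1))*s + 2*s*(m-(i'+1)*s) + s))
                * (qPoch s)⁻¹ * gco i' i' (m-(i'+1)*s) else 0) := by
        intro s _
        have hE2 : (i'+1)*s^2 + (i'+1-i')*s + 2*s*(m-(i'+1)*s)
            = (i'+1)*s^2 + (i'+1-(i'+1))*s + 2*s*(m-(i'+1)*s) + s := by
          rw [show i'+1-i' = (i'+1-(i'+1))+1 from by omega]; ring
        by_cases h : (i'+1)*s ≤ m
        · rw [if_pos h, if_pos h, if_pos h, hE2]
          ring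
        · rw [if_neg h, if_neg h, if_neg h, sub_self]
      rw [Finset.sum_congr rfl key]
      by_cases him : i'+1 ≤ m
      · rw [if_pos him]
        have hkey2 : ∀ u ∈ Finset.range (m-(i'+1)+1),
            (if (i'+1)*u ≤ m-(i'+1) then
                (X : PowerSeries ℚ)^((i'+1)*u^2 + (i'+1)*u + 2*u*(m-(i'+1)-(i'+1)*u)) * (qPoch u)⁻¹
                  * gco i' 0 (m-(i'+1)-(i'+1)*u) else 0)
            = (if (i'+1)*u ≤ m-(i'+1) then
                (X : PowerSeries ℚ)^((i'+1)*u^2 + (i'+1)*u + 2*u*(m-(i'+1)-(i'+1)*u) + (m-(i'+1)-(i'+1)*u))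
                  * (qPoch u)⁻¹ * gco i' i' (m-(i'+1)-(i'+1)*u) else 0) := by
          intro u _
          rw [B_coeff i' (m-(i'+1)-(i'+1)*u)]
          refine if_congr Iff.rfl ?_ rfl
          rw [pow_add]; ring
        rw [Finset.sum_congr rfl hkey2, Finset.mul_sum]
        have hsub : Finset.range (m-(i'+1)+1) ⊆ Finset.range (m+1) :=
          Finset.range_subset_range.mpr (by omega)
        have hzB : ∀ x ∈ Finset.range (m+1), x ∉ Finset.range (m-(i'+1)+1) →
            (X : PowerSeries ℚ)^m * (if (i'+1)*x ≤ m-(i'+1) then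
              (X : PowerSeries ℚ)^((i'+1)*x^2 + (i'+1)*x + 2*x*(m-(i'+1)-(i'+1)*x) + (m-(i'+1)-(i'+1)*x))
                * (qPoch x)⁻¹ * gco i' i' (m-(i'+1)-(i'+1)*x) else 0) = 0 := by
          intro x hx hnx
          have hx1 := Finset.mem_range.mp hx
          have hx2 : ¬ (x < m-(i'+1)+1) := fun h => hnx (Finset.mem_range.mpr h)
          have := s_le_mul i' x
          rw [if_neg (by omega), mul_zero]
        rw [Finset.sum_subset hsub hzB, Finset.sum_range_succ' _ m, Finset.sum_range_succ]
        have h0 : (if (i'+1)*0 ≤ m then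
            ((X : PowerSeries ℚ)^((i'+1)*0^2 + (i'+1-(i'+1))*0 + 2*0*(m-(i'+1)*0))
              - (X : PowerSeries ℚ)^((i'+1)*0^2 + (i'+1-(i'+1))*0 + 2*0*(m-(i'+1)*0) + 0))
              * (qPoch 0)⁻¹ * gco i' i' (m-(i'+1)*0) else 0) = 0 := by
          simp
        have hm : (X : PowerSeries ℚ)^m * (if (i'+1)*m ≤ m-(i'+1) then
            (X : PowerSeries ℚ)^((i'+1)*m^2 + (i'+1)*m + 2*m*(m-(i'+1)-(i'+1)*m) + (m-(i'+1)-(i'+1)*m))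
              * (qPoch m)⁻¹ * gco i' i' (m-(i'+1)-(i'+1)*m) else 0) = 0 := by
          have := s_le_mul i' m
          rw [if_neg (by omega), mul_zero]
        rw [h0, hm, add_zero, add_zero]
        refine Finset.sum_congr rfl fun u _ => ?_
        have hmul : (i'+1)*(u+1) = (i'+1)*u + (i'+1) := by ring
        have hsle := s_le_mul i' u
        rw [mul_ite, mul_zero]
        by_cases hc : (i'+1)*(u+1) ≤ m
        · have hc1 : (i'+1)*u ≤ m-(i'+1) := by omega
          rw [if_pos hc, if_pos hc1]
          rw [show m-(i'+1)-(i'+1)*u = m-(i'+1)*(u+1) from by omega]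
          rw [fold_sub u ((i'+1)*(u+1)^2 + (i'+1-(i'+1))*(u+1) + 2*(u+1)*(m-(i'+1)*(u+1)))]
          have hexp : (i'+1)*(u+1)^2 + (i'+1-(i'+1))*(u+1) + 2*(u+1)*(m-(i'+1)*(u+1))
              = m + ((i'+1)*u^2 + (i'+1)*u + 2*u*(m-(i'+1)*(u+1)) + (m-(i'+1)*(u+1))) := by
            zify [Nat.sub_self, show (i'+1)*(u+1) ≤ m from hc]
            ring
          rw [hexp, pow_add]
          ring
        · rw [if_neg hc, if_neg (by omega)]
      · rw [if_neg him]
        refine Finset.sum_eq_zero fun s _ => ?_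
        by_cases h : (i'+1)*s ≤ m
        · rcases Nat.eq_zero_or_pos s with rfl | hspos
          · simp
          · exfalso
            have := Nat.le_mul_of_pos_right (i'+1) hspos
            omega
        · exact if_neg h



/-- **The Gordon–Andrews multisums satisfy the Rogers–Selberg recursions**: for `k ≥ 1`,
`G_i(x,q) - (xq)^i G_{k-i}(xq,q) = G_{i-1}(x,q)` for `1 ≤ i ≤ k`, and
`G_0(x,q) = G_k(xq,q)`. -/
theorem gordon_andrews_satisfy_rogers_selberg (k : ℕ) (hk : 1 ≤ k) :
    (∀ i, 1 ≤ i → i ≤ k →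
        GA k i - (xVar * qVar) ^ i * qShift 1 (GA k (k - i)) = GA k (i - 1)) ∧
      GA k 0 = qShift 1 (GA k k) := by
  constructor
  · intro i h1 hik
    refine PowerSeries.ext fun m => ?_
    rw [map_sub, coeff_rhs]
    have h := Amain k i m h1 hik
    unfold gco at h
    rw [h, add_sub_cancel_right]
  · refine PowerSeries.ext fun m => ?_
    have h := B_coeff k m
    unfold gco at h
    rw [h, qShift, coeff_mk, one_mul]
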